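/- arXiv:1106.4776 — 3 statements merged into one kernel-verified Lean document; each statement's English description precedes it below -/
import Mathlib

section
/- The function u is differentiable at every point z of the sector S, and its differential satisfies the bound ‖Du(z)‖ ≤ 5/‖z‖ for all z ∈ S. (This is the key estimate in the proof of Lemma 4.2: the primitive η = (1/2)(∂̄ − ∂) log(1 + Σ|z_j|²/|z₀|²) of the pulled-back Fubini–Study form has comass ‖η‖* ≤ C/ρ, where ρ is the distance from the origin.) -/
open Metric

set_option maxHeartbeats 1000000
set_option synthInstance.maxHeartbeats 400000

private lemma inv_sq_mul_two_mul (a : ℝ) (ha : 0 < a) : (a ^ 2)⁻¹ * (2 * a) = 2 / a := by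
  rw [sq]
  field_simp

/-- The sector `S = {(z₀, z') : ‖z'‖ < |z₀|}` inside `ℂ × ℂⁿ`, the latter being
equipped with the Euclidean (l²) norm `‖(z₀, z')‖² = |z₀|² + ‖z'‖²`. -/
def sector (n : ℕ) : Set (WithLp 2 (ℂ × EuclideanSpace ℂ (Fin n))) :=
  {z | ‖z.ofLp.2‖ < ‖z.ofLp.1‖}

/-- The potential `u(z₀, z') = log(1 + ‖z'‖²/|z₀|²)` whose differential gives the
primitive `η = ½(∂̄ − ∂)u` of the pulled-back Fubini–Study form. -/
noncomputable def sectorPotential (n : ℕ)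
    (z : WithLp 2 (ℂ × EuclideanSpace ℂ (Fin n))) : ℝ :=
  Real.log (1 + ‖z.ofLp.2‖ ^ 2 / ‖z.ofLp.1‖ ^ 2)

/-- **Comass estimate for the primitive of the pulled-back Fubini–Study form**
(key estimate in the proof of Lemma 4.2): the function
`u(z₀,z') = log(1 + ‖z'‖²/|z₀|²)` is differentiable at every point of the
sector `S = {‖z'‖ < |z₀|}` and its differential satisfies `‖Du(z)‖ ≤ 5/‖z‖`. -/
theorem fubiniStudy_primitive_derivative_bound
    (n : ℕ) (z : WithLp 2 (ℂ × EuclideanSpace ℂ (Fin n)))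
    (hz : z ∈ sector n) :
    DifferentiableAt ℝ (sectorPotential n) z ∧
      ‖fderiv ℝ (sectorPotential n) z‖ ≤ 5 / ‖z‖ := by
  have h2 : ‖z.ofLp.2‖ < ‖z.ofLp.1‖ := hz
  have n1 : (0:ℝ) < ‖z.ofLp.1‖ := lt_of_le_of_lt (norm_nonneg _) h2
  have hz1 : z.ofLp.1 ≠ 0 := norm_pos_iff.mp n1
  have hz0 : z ≠ 0 := fun h => hz1 (by rw [h]; rfl)
  have nz : (0:ℝ) < ‖z‖ := norm_pos_iff.mpr hz0
  have hsq : ‖z‖ ^ 2 = ‖z.ofLp.1‖ ^ 2 + ‖z.ofLp.2‖ ^ 2 := WithLp.prod_norm_sq_eq_of_L2 z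
  -- the projection onto the first factor as a continuous linear map
  set P : WithLp 2 (ℂ × EuclideanSpace ℂ (Fin n)) →L[ℝ] ℂ :=
    (ContinuousLinearMap.fst ℝ ℂ (EuclideanSpace ℂ (Fin n))).comp
      (WithLp.prodContinuousLinearEquiv 2 ℝ ℂ
        (EuclideanSpace ℂ (Fin n))).toContinuousLinearMap with hP
  have hPapp : ∀ w : WithLp 2 (ℂ × EuclideanSpace ℂ (Fin n)), P w = w.ofLp.1 := fun w => rfl
  have hPnorm : ‖P‖ ≤ 1 := by
    refine ContinuousLinearMap.opNorm_le_bound _ zero_le_one fun w => ?_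
    rw [hPapp, one_mul]
    have : ‖w‖ ^ 2 = ‖w.ofLp.1‖ ^ 2 + ‖w.ofLp.2‖ ^ 2 := WithLp.prod_norm_sq_eq_of_L2 w
    nlinarith [norm_nonneg w, norm_nonneg w.ofLp.1, sq_nonneg ‖w.ofLp.2‖]
  -- derivative of log ‖w‖²
  have hq : HasFDerivAt (fun w : WithLp 2 (ℂ × EuclideanSpace ℂ (Fin n)) => ‖w‖ ^ 2)
      (2 • innerSL ℝ z) z := (hasStrictFDerivAt_norm_sq z).hasFDerivAt
  have hf : HasFDerivAt (fun w : WithLp 2 (ℂ × EuclideanSpace ℂ (Fin n)) => Real.log (‖w‖ ^ 2))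
      ((‖z‖ ^ 2)⁻¹ • (2 • innerSL ℝ z)) z := by
    have := (Real.hasDerivAt_log (by positivity : (‖z‖:ℝ) ^ 2 ≠ 0)).comp_hasFDerivAt z hq
    exact this
  -- derivative of log ‖w.ofLp.1‖²
  have hq1 : HasFDerivAt (fun w : WithLp 2 (ℂ × EuclideanSpace ℂ (Fin n)) => ‖P w‖ ^ 2)
      (2 • (innerSL ℝ (P z)).comp P) z := P.hasFDerivAt.norm_sq
  have hg : HasFDerivAt
      (fun w : WithLp 2 (ℂ × EuclideanSpace ℂ (Fin n)) => Real.log (‖P w‖ ^ 2))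
      ((‖z.ofLp.1‖ ^ 2)⁻¹ • (2 • (innerSL ℝ (P z)).comp P)) z := by
    have hne : ‖P z‖ ^ 2 ≠ 0 := by rw [hPapp]; positivity
    have := (Real.hasDerivAt_log hne).comp_hasFDerivAt z hq1
    exact this
  -- u agrees with the difference near z
  have heq : (sectorPotential n) =ᶠ[nhds z]
      fun w => Real.log (‖w‖ ^ 2) - Real.log (‖P w‖ ^ 2) := by
    have hopen : {w : WithLp 2 (ℂ × EuclideanSpace ℂ (Fin n)) | w.ofLp.1 ≠ 0} ∈ nhds z := by
      have ho : {w : WithLp 2 (ℂ × EuclideanSpace ℂ (Fin n)) | w.ofLp.1 ≠ 0} = P ⁻¹' {0}ᶜ := by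
        ext w; simp [hPapp]
      rw [ho]
      exact (isOpen_compl_singleton.preimage P.continuous).mem_nhds (by simpa [hPapp] using hz1)
    filter_upwards [hopen] with w hw
    have w1 : (0:ℝ) < ‖w.ofLp.1‖ ^ 2 := pow_pos (norm_pos_iff.mpr hw) 2
    have hwsq : ‖w‖ ^ 2 = ‖w.ofLp.1‖ ^ 2 + ‖w.ofLp.2‖ ^ 2 := WithLp.prod_norm_sq_eq_of_L2 w
    have w0 : (0:ℝ) < ‖w‖ ^ 2 := by nlinarith [sq_nonneg ‖w.ofLp.2‖]
    have key : (1:ℝ) + ‖w.ofLp.2‖ ^ 2 / ‖w.ofLp.1‖ ^ 2 = ‖w‖ ^ 2 / ‖w.ofLp.1‖ ^ 2 := by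
      rw [hwsq, add_div, div_self (ne_of_gt w1)]
    show Real.log (1 + ‖w.ofLp.2‖ ^ 2 / ‖w.ofLp.1‖ ^ 2) = _
    rw [key, Real.log_div (ne_of_gt w0) (ne_of_gt w1), hPapp]
  have hu : HasFDerivAt (sectorPotential n)
      ((‖z‖ ^ 2)⁻¹ • (2 • innerSL ℝ z) - (‖z.ofLp.1‖ ^ 2)⁻¹ • (2 • (innerSL ℝ (P z)).comp P)) z :=
    (hf.sub hg).congr_of_eventuallyEq heq
  refine ⟨hu.differentiableAt, ?_⟩
  rw [hu.fderiv]
  have b1 : ‖(‖z‖ ^ 2)⁻¹ • (2 • innerSL ℝ z)‖ ≤ 2 / ‖z‖ := by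
    have h1 : ‖(2 : ℕ) • innerSL ℝ z‖ ≤ 2 * ‖innerSL ℝ z‖ := norm_nsmul_le (n := 2)
    rw [innerSL_apply_norm] at h1
    calc ‖(‖z‖ ^ 2)⁻¹ • (2 • innerSL ℝ z)‖
        ≤ ‖(‖z‖ ^ 2)⁻¹‖ * ‖(2 : ℕ) • innerSL ℝ z‖ := norm_smul_le _ _
      _ = (‖z‖ ^ 2)⁻¹ * ‖(2 : ℕ) • innerSL ℝ z‖ := by
          rw [Real.norm_eq_abs, abs_of_pos (by positivity)]
      _ ≤ (‖z‖ ^ 2)⁻¹ * (2 * ‖z‖) := mul_le_mul_of_nonneg_left h1 (by positivity)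
      _ = 2 / ‖z‖ := inv_sq_mul_two_mul _ nz
  have b2 : ‖(‖z.ofLp.1‖ ^ 2)⁻¹ • (2 • (innerSL ℝ (P z)).comp P)‖ ≤ 2 / ‖z.ofLp.1‖ := by
    have hcomp : ‖(innerSL ℝ (P z)).comp P‖ ≤ ‖z.ofLp.1‖ := by
      calc ‖(innerSL ℝ (P z)).comp P‖ ≤ ‖innerSL ℝ (P z)‖ * ‖P‖ :=
            ContinuousLinearMap.opNorm_comp_le _ _
        _ ≤ ‖z.ofLp.1‖ * 1 := by
            rw [innerSL_apply_norm, hPapp]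
            exact mul_le_mul_of_nonneg_left hPnorm (norm_nonneg _)
        _ = ‖z.ofLp.1‖ := mul_one _
    have h1 : ‖(2 : ℕ) • (innerSL ℝ (P z)).comp P‖ ≤ 2 * ‖z.ofLp.1‖ := by
      calc ‖(2 : ℕ) • (innerSL ℝ (P z)).comp P‖ ≤ 2 * ‖(innerSL ℝ (P z)).comp P‖ :=
            norm_nsmul_le (n := 2)
        _ ≤ 2 * ‖z.ofLp.1‖ := by linarith
    calc ‖(‖z.ofLp.1‖ ^ 2)⁻¹ • (2 • (innerSL ℝ (P z)).comp P)‖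
        ≤ ‖(‖z.ofLp.1‖ ^ 2)⁻¹‖ * ‖(2 : ℕ) • (innerSL ℝ (P z)).comp P‖ := norm_smul_le _ _
      _ = (‖z.ofLp.1‖ ^ 2)⁻¹ * ‖(2 : ℕ) • (innerSL ℝ (P z)).comp P‖ := by
          rw [Real.norm_eq_abs, abs_of_pos (by positivity)]
      _ ≤ (‖z.ofLp.1‖ ^ 2)⁻¹ * (2 * ‖z.ofLp.1‖) := mul_le_mul_of_nonneg_left h1 (by positivity)
      _ = 2 / ‖z.ofLp.1‖ := inv_sq_mul_two_mul _ n1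
  have htot : ‖(‖z‖ ^ 2)⁻¹ • (2 • innerSL ℝ z) - (‖z.ofLp.1‖ ^ 2)⁻¹ • (2 • (innerSL ℝ (P z)).comp P)‖
      ≤ 2 / ‖z‖ + 2 / ‖z.ofLp.1‖ := le_trans (norm_sub_le _ _) (add_le_add b1 b2)
  refine le_trans htot ?_
  have h15 : ‖z‖ ≤ 1.5 * ‖z.ofLp.1‖ := by nlinarith [nz, n1, hsq, h2, norm_nonneg z.ofLp.2]
  rw [div_add_div _ _ (ne_of_gt nz) (ne_of_gt n1), div_le_div_iff₀ (by positivity) nz]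
  nlinarith [mul_pos nz n1]
end

section
/- If μ is almost monotone at a point x with constants r₀ > 0 and C ≥ 0, then the 2-dimensional density ν(x) := lim_{r→0⁺} μ(B(x, r))/(π·r²) exists and is finite. (Existence of the density, or Lelong number, at every point for an almost monotone mass measure.) -/
open Metric MeasureTheory Filter Real

/-- **Existence of the 2-dimensional density (Lelong number).**
If a finite Borel measure `μ` on `ℝ^d` is almost monotone at `x` with
constants `r₀ > 0`, `C ≥ 0` — i.e. there is a nondecreasing
`R : (0, r₀) → ℝ` with `|μ(B(x,r))/(π r²) − R(r)| ≤ C r` for `r ∈ (0, r₀)` —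
then the density `ν(x) = lim_{r→0⁺} μ(B(x,r))/(π r²)` exists and is finite. -/
theorem density_exists_of_almost_monotone
    (d : ℕ) (μ : Measure (EuclideanSpace ℝ (Fin d))) [IsFiniteMeasure μ]
    (x : EuclideanSpace ℝ (Fin d)) (r₀ C : ℝ) (hr₀ : 0 < r₀) (hC : 0 ≤ C)
    (R : ℝ → ℝ) (hR : MonotoneOn R (Set.Ioo 0 r₀))
    (hmon : ∀ r ∈ Set.Ioo (0 : ℝ) r₀,
      |(μ (ball x r)).toReal / (π * r ^ 2) - R r| ≤ C * r) :
    ∃ ν : ℝ, Tendsto (fun r : ℝ => (μ (ball x r)).toReal / (π * r ^ 2))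
      (nhdsWithin 0 (Set.Ioi 0)) (nhds ν) := by
  set f : ℝ → ℝ := fun r => (μ (ball x r)).toReal / (π * r ^ 2) with hf
  have hfnn : ∀ r, 0 ≤ f r := fun r => by
    apply div_nonneg ENNReal.toReal_nonneg
    positivity
  -- R is bounded below on Ioo 0 r₀
  have hbdd : BddBelow (R '' Set.Ioo 0 r₀) := by
    refine ⟨-(C * r₀), ?_⟩
    rintro _ ⟨r, hr, rfl⟩
    have h := hmon r hr
    have h1 : f r - R r ≤ C * r := (abs_le.1 h).2
    have h2 : C * r ≤ C * r₀ := by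
      apply mul_le_mul_of_nonneg_left hr.2.le hC
    nlinarith [hfnn r]
  have hne : (Set.Ioo (0:ℝ) r₀).Nonempty := Set.nonempty_Ioo.2 hr₀
  have hRlim : Tendsto R (nhdsWithin 0 (Set.Ioi 0))
      (nhds (sInf (R '' Set.Ioo 0 r₀))) :=
    MonotoneOn.tendsto_nhdsWithin_Ioo_right hne hR hbdd
  refine ⟨sInf (R '' Set.Ioo 0 r₀), ?_⟩
  -- f - R → 0
  have hdiff : Tendsto (fun r => f r - R r) (nhdsWithin 0 (Set.Ioi 0)) (nhds 0) := by
    have hCr : Tendsto (fun r : ℝ => C * r) (nhdsWithin 0 (Set.Ioi 0)) (nhds 0) := by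
      have : Tendsto (fun r : ℝ => C * r) (nhds 0) (nhds (C * 0)) :=
        (tendsto_id.const_mul C)
      simpa using this.mono_left nhdsWithin_le_nhds
    apply squeeze_zero_norm' _ hCr
    filter_upwards [Ioo_mem_nhdsGT_of_mem (by simp [hr₀] : (0:ℝ) ∈ Set.Ico 0 r₀)] with r hr
    simpa using hmon r hr
  have := hdiff.add hRlim
  simp only [zero_add] at this
  convert this using 2 with r
  ring
end

section
/- Let U ⊆ ℝ^d be open and suppose μ is almost monotone at every x ∈ U with the same constants r₀ > 0 and C ≥ 0 (independent of the point). Then the density function ν(x) := lim_{r→0⁺} μ(B(x, r))/(π·r²) is well defined and upper semicontinuous on U. (The paper's claim: since r₀ and C do not depend on the point, the density ν is an upper semicontinuous function.) -/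
open Metric MeasureTheory Filter Real

set_option maxHeartbeats 1000000 in
/-- **Upper semicontinuity of the density.**
If a finite Borel measure `μ` on `ℝ^d` is almost monotone at every point of
an open set `U` with the same constants `r₀ > 0` and `C ≥ 0` (independent of
the point), then the density `ν(x) = lim_{r→0⁺} μ(B(x,r))/(π r²)` is well
defined and upper semicontinuous on `U`. -/
theorem density_upperSemicontinuous_of_almost_monotone
    (d : ℕ) (μ : Measure (EuclideanSpace ℝ (Fin d))) [IsFiniteMeasure μ]
    (U : Set (EuclideanSpace ℝ (Fin d))) (hU : IsOpen U)
    (r₀ C : ℝ) (hr₀ : 0 < r₀) (hC : 0 ≤ C)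
    (hmon : ∀ x ∈ U, ∃ R : ℝ → ℝ, MonotoneOn R (Set.Ioo 0 r₀) ∧
      ∀ r ∈ Set.Ioo (0 : ℝ) r₀,
        |(μ (ball x r)).toReal / (π * r ^ 2) - R r| ≤ C * r) :
    ∃ ν : EuclideanSpace ℝ (Fin d) → ℝ,
      (∀ x ∈ U, Tendsto (fun r : ℝ => (μ (ball x r)).toReal / (π * r ^ 2))
        (nhdsWithin 0 (Set.Ioi 0)) (nhds (ν x))) ∧
      UpperSemicontinuousOn ν U := by
  set f : EuclideanSpace ℝ (Fin d) → ℝ → ℝ :=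
    fun x r => (μ (ball x r)).toReal / (π * r ^ 2) with hf
  have hfnonneg : ∀ x r, 0 ≤ f x r := by
    intro x r
    apply div_nonneg ENNReal.toReal_nonneg
    positivity
  -- key: at each point of U the limit exists and satisfies a one-sided bound
  have key : ∀ x ∈ U, ∃ L : ℝ,
      Tendsto (f x) (nhdsWithin 0 (Set.Ioi 0)) (nhds L) ∧
      ∀ r ∈ Set.Ioo (0 : ℝ) r₀, L ≤ f x r + C * r := by
    intro x hx
    obtain ⟨R, hRmono, hRb⟩ := hmon x hx
    set S : Set ℝ := R '' Set.Ioo 0 r₀ with hS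
    have hSne : S.Nonempty := ⟨R (r₀ / 2), ⟨r₀ / 2, ⟨by linarith, by linarith⟩, rfl⟩⟩
    have hSbdd : BddBelow S := by
      refine ⟨-(C * r₀), ?_⟩
      rintro v ⟨r, hr, rfl⟩
      have hb := hRb r hr
      have h1 : f x r - R r ≤ C * r := (abs_le.mp hb).2
      have h2 : -(C * r) ≤ f x r - R r := (abs_le.mp hb).1
      have := hfnonneg x r
      have hCr : C * r ≤ C * r₀ := by
        apply mul_le_mul_of_nonneg_left (le_of_lt hr.2) hC
      nlinarith [h1, h2]
    set L : ℝ := sInf S with hL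
    have hLle : ∀ r ∈ Set.Ioo (0 : ℝ) r₀, L ≤ R r := by
      intro r hr
      exact csInf_le hSbdd ⟨r, hr, rfl⟩
    refine ⟨L, ?_, ?_⟩
    · rw [Metric.tendsto_nhdsWithin_nhds]
      intro ε hε
      -- pick s with R s < L + ε / 2
      obtain ⟨v, ⟨s, hs, rfl⟩, hv⟩ := exists_lt_of_csInf_lt hSne
        (show L < L + ε / 2 by linarith)
      refine ⟨min s (ε / (2 * (C + 1))), lt_min hs.1 (by positivity), ?_⟩
      intro r hr hrd
      have hr0 : 0 < r := hr
      rw [Real.dist_eq, sub_zero, abs_of_pos hr0] at hrd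
      have hrs : r < s := lt_of_lt_of_le hrd (min_le_left _ _)
      have hrC : r < ε / (2 * (C + 1)) := lt_of_lt_of_le hrd (min_le_right _ _)
      have hrIoo : r ∈ Set.Ioo (0 : ℝ) r₀ := ⟨hr0, hrs.trans hs.2⟩
      have hRr : R r ≤ R s := hRmono hrIoo hs hrs.le
      have hRrL : L ≤ R r := hLle r hrIoo
      have hb := abs_le.mp (hRb r hrIoo)
      have hCr : C * r ≤ C * (ε / (2 * (C + 1))) :=
        mul_le_mul_of_nonneg_left hrC.le hC
      have hCe : C * (ε / (2 * (C + 1))) < ε / 2 := by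
        rw [mul_div_assoc', div_lt_div_iff₀ (by positivity) (by norm_num : (0:ℝ) < 2)]
        nlinarith
      rw [Real.dist_eq, abs_lt]
      constructor <;> nlinarith
    · intro r hr
      have hb := (abs_le.mp (hRb r hr)).1
      have := hLle r hr
      nlinarith
  refine ⟨fun x => limUnder (nhdsWithin 0 (Set.Ioi 0)) (f x), ?_, ?_⟩
  · intro x hx
    obtain ⟨L, hL, _⟩ := key x hx
    show Tendsto (f x) (nhdsWithin 0 (Set.Ioi 0))
      (nhds (limUnder (nhdsWithin 0 (Set.Ioi 0)) (f x)))
    rwa [hL.limUnder_eq]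
  · -- upper semicontinuity
    set ν : EuclideanSpace ℝ (Fin d) → ℝ :=
      fun x => limUnder (nhdsWithin 0 (Set.Ioi 0)) (f x) with hν
    have hνtend : ∀ x ∈ U, Tendsto (f x) (nhdsWithin 0 (Set.Ioi 0)) (nhds (ν x)) := by
      intro x hx
      obtain ⟨L, hL, _⟩ := key x hx
      have hx' : ν x = limUnder (nhdsWithin 0 (Set.Ioi 0)) (f x) := rfl
      rwa [hx', hL.limUnder_eq]
    have hνbound : ∀ x ∈ U, ∀ r ∈ Set.Ioo (0 : ℝ) r₀, ν x ≤ f x r + C * r := by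
      intro x hx
      obtain ⟨L, hL, hLb⟩ := key x hx
      have : ν x = L := by
        have hx' : ν x = limUnder (nhdsWithin 0 (Set.Ioi 0)) (f x) := rfl
        rw [hx', hL.limUnder_eq]
      rw [this]; exact hLb
    have hνnonneg : ∀ x ∈ U, 0 ≤ ν x := by
      intro x hx
      refine ge_of_tendsto (hνtend x hx) ?_
      filter_upwards with r using hfnonneg x r
    intro x hx y hy
    set ε : ℝ := y - ν x with hε
    have hε0 : 0 < ε := by simp [hε]; linarith
    set M : ℝ := ν x + ε / 4 with hM
    have hM0 : 0 < M := by have := hνnonneg x hx; simp [hM]; linarith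
    -- choose s₁ such that f x s < M for s ∈ (0, s₁)
    have htend := hνtend x hx
    rw [Metric.tendsto_nhdsWithin_nhds] at htend
    obtain ⟨s₁, hs₁0, hs₁⟩ := htend (ε / 4) (by linarith)
    set s₀ : ℝ := min (min s₁ r₀) (ε / (4 * (C + 1))) with hs₀
    have hs₀0 : 0 < s₀ := by
      apply lt_min (lt_min hs₁0 hr₀); positivity
    have hs₀r₀ : s₀ ≤ r₀ := le_trans (min_le_left _ _) (min_le_right _ _)
    have hs₀s₁ : s₀ ≤ s₁ := le_trans (min_le_left _ _) (min_le_left _ _)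
    have hCs₀ : C * s₀ < ε / 4 := by
      have h1 : C * s₀ ≤ C * (ε / (4 * (C + 1))) :=
        mul_le_mul_of_nonneg_left (min_le_right _ _) hC
      have h2 : C * (ε / (4 * (C + 1))) < ε / 4 := by
        rw [mul_div_assoc', div_lt_div_iff₀ (by positivity) (by norm_num)]
        nlinarith
      linarith
    set r : ℝ := s₀ / 2 with hr
    have hr0 : 0 < r := by positivity
    set δ₀ : ℝ := min r (ε * r / (12 * M)) with hδ₀
    have hδ₀0 : 0 < δ₀ := by apply lt_min hr0; positivity
    filter_upwards [inter_mem_nhdsWithin U (Metric.ball_mem_nhds x hδ₀0)] with z hz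
    obtain ⟨hzU, hzball⟩ := hz
    set δ : ℝ := dist z x with hδ
    have hδlt : δ < δ₀ := by rwa [mem_ball] at hzball
    have hδnn : 0 ≤ δ := dist_nonneg
    have hδr : δ ≤ r := le_trans hδlt.le (min_le_left _ _)
    have hδM : δ ≤ ε * r / (12 * M) := le_trans hδlt.le (min_le_right _ _)
    have hδ₀r : δ₀ ≤ r := min_le_left _ _
    clear_value ε M s₀ r δ₀ δ
    -- r + δ < s₀ ≤ s₁ and r + δ ≤ r₀
    have hδltr : δ < r := lt_of_lt_of_le hδlt hδ₀r
    have hrδs₀ : r + δ < s₀ := by rw [hr] at hδltr ⊢; linarith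
    have hrIoo : r ∈ Set.Ioo (0 : ℝ) r₀ := ⟨hr0, by rw [hr]; linarith⟩
    -- step 1 : ν z ≤ f z r + C r
    have step1 : ν z ≤ f z r + C * r := hνbound z hzU r hrIoo
    -- step 2 : f z r ≤ (μ (ball x (r + δ))).toReal / (π * r ^ 2)
    have hsub : ball z r ⊆ ball x (r + δ) := by
      intro w hw
      rw [mem_ball] at hw ⊢
      calc dist w x ≤ dist w z + dist z x := dist_triangle w z x
        _ < r + δ := by rw [hδ]; linarith
    have hπr : (0:ℝ) < π * r ^ 2 := by positivity
    have step2 : f z r ≤ (μ (ball x (r + δ))).toReal / (π * r ^ 2) := by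
      have hμle : (μ (ball z r)).toReal ≤ (μ (ball x (r + δ))).toReal :=
        ENNReal.toReal_mono (measure_ne_top μ _) (measure_mono hsub)
      show (μ (ball z r)).toReal / (π * r ^ 2) ≤ (μ (ball x (r + δ))).toReal / (π * r ^ 2)
      gcongr
    -- step 3 : the measure of the bigger ball is controlled by M
    have hrδ0 : (0:ℝ) < r + δ := by linarith
    have hrδs₁ : r + δ < s₁ := lt_of_lt_of_le hrδs₀ hs₀s₁
    have hfx : f x (r + δ) < M := by
      have h1 := hs₁ (show r + δ ∈ Set.Ioi (0:ℝ) from hrδ0)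
        (by rw [Real.dist_eq, sub_zero, abs_of_pos hrδ0]; exact hrδs₁)
      rw [Real.dist_eq] at h1
      have h2 := abs_lt.mp h1
      rw [hM]; linarith [h2.2]
    have hπrδ : (0:ℝ) < π * (r + δ) ^ 2 := by positivity
    have step3 : (μ (ball x (r + δ))).toReal ≤ M * (π * (r + δ) ^ 2) := by
      have hle : f x (r + δ) ≤ M := hfx.le
      have heq : (μ (ball x (r + δ))).toReal = f x (r + δ) * (π * (r + δ) ^ 2) := by
        rw [hf]; field_simp
      rw [heq]; nlinarith
    -- step 4 : ratio estimate
    have step4 : M * (π * (r + δ) ^ 2) / (π * r ^ 2) ≤ M + ε / 4 := by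
      rw [div_le_iff₀ hπr]
      have h12 : δ * (12 * M) ≤ ε * r := (le_div_iff₀ (by positivity)).mp hδM
      have hδ2 : M * (δ * δ) ≤ M * (r * δ) :=
        mul_le_mul_of_nonneg_left (mul_le_mul_of_nonneg_right hδr hδnn) hM0.le
      have h12r : δ * (12 * M) * r ≤ ε * r * r :=
        mul_le_mul_of_nonneg_right h12 hr0.le
      have hkey : M * (r + δ) ^ 2 ≤ (M + ε / 4) * r ^ 2 := by nlinarith [hδ2, h12r]
      nlinarith [mul_le_mul_of_nonneg_left hkey pi_pos.le]
    have hCr : C * r < ε / 4 := by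
      have h1 : C * r ≤ C * s₀ := mul_le_mul_of_nonneg_left (by rw [hr]; linarith) hC
      linarith
    have step5 : (μ (ball x (r + δ))).toReal / (π * r ^ 2)
        ≤ M * (π * (r + δ) ^ 2) / (π * r ^ 2) := by gcongr
    calc ν z ≤ f z r + C * r := step1
      _ ≤ (μ (ball x (r + δ))).toReal / (π * r ^ 2) + C * r := by linarith [step2]
      _ ≤ M * (π * (r + δ) ^ 2) / (π * r ^ 2) + C * r := by linarith [step5]
      _ ≤ M + ε / 4 + C * r := by linarith [step4]
      _ < y := by rw [hM]; rw [hε] at hCr ⊢; linarith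
end
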